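/- (Corollary 6.7) Let ξ = exp(iπ/5) ∈ ℂ and τ = (1+√5)/2. For every n ∈ ℕ, the set L(n) := {x ∈ ℝ : ∃ (n₀, …, n₉) ∈ ℕ¹⁰, Σ_{j=0}^{9} n_j ≤ n and x = Σ_{j=0}^{9} n_j ξ^j} equals {(a + c) + (b - c)τ : a, b, c ∈ ℤ, |a| + 2|b| + 2|c| ≤ n}. -/

import Mathlib

noncomputable def tau : ℝ := (1 + Real.sqrt 5) / 2

/-- ξ = exp(iπ/5), a primitive 10th root of unity. -/
noncomputable def xi : ℂ := Complex.exp (Real.pi * Complex.I / 5)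

/-- L(n): the real points of the quasicrystal fragment Q₂(n), i.e. the real numbers
which are sums of at most n 10th roots of unity. -/
noncomputable def L (n : ℕ) : Set ℝ :=
  {x : ℝ | ∃ m : Fin 10 → ℕ, (∑ j, m j) ≤ n ∧ (x : ℂ) = ∑ j, (m j : ℂ) * xi ^ (j : ℕ)}

lemma tau_sq : tau ^ 2 = tau + 1 := by
  have h5 : Real.sqrt 5 ^ 2 = 5 := Real.sq_sqrt (by norm_num)
  unfold tau; nlinarith [h5]

lemma xi_eq : xi = (Real.cos (Real.pi / 5) : ℂ) + (Real.sin (Real.pi / 5) : ℂ) * Complex.I := by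
  unfold xi
  rw [show (Real.pi : ℂ) * Complex.I / 5 = ((Real.pi / 5 : ℝ) : ℂ) * Complex.I by
    push_cast; ring]
  rw [Complex.exp_mul_I, ← Complex.ofReal_cos, ← Complex.ofReal_sin]

lemma xi_im_pos : 0 < xi.im := by
  rw [xi_eq]
  simp only [Complex.add_im, Complex.ofReal_im, Complex.mul_im, Complex.ofReal_re,
    Complex.I_im, Complex.I_re, mul_zero, mul_one, zero_add, add_zero]
  exact Real.sin_pos_of_pos_of_lt_pi (by positivity) (by linarith [Real.pi_pos])

lemma hxi2 : xi ^ 2 = (tau : ℂ) * xi - 1 := by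
  have hc : Real.cos (Real.pi / 5) = (1 + Real.sqrt 5) / 4 := Real.cos_pi_div_five
  have hpy : Real.sin (Real.pi / 5) ^ 2 + Real.cos (Real.pi / 5) ^ 2 = 1 :=
    Real.sin_sq_add_cos_sq _
  have hpyC : ((Real.sin (Real.pi / 5) : ℂ)) ^ 2 + ((Real.cos (Real.pi / 5) : ℂ)) ^ 2 = 1 := by
    exact_mod_cast hpy
  have htc : ((tau : ℝ) : ℂ) = 2 * (Real.cos (Real.pi / 5) : ℂ) := by
    rw [hc]; unfold tau; push_cast; ring
  rw [htc, xi_eq]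
  linear_combination ((Real.sin (Real.pi / 5) : ℂ)) ^ 2 * Complex.I_sq - hpyC

lemma hxi5 : xi ^ 5 = -1 := by
  unfold xi
  rw [← Complex.exp_nat_mul]
  rw [show (5 : ℕ) * ((Real.pi : ℂ) * Complex.I / 5) = Real.pi * Complex.I by push_cast; ring]
  exact Complex.exp_pi_mul_I

lemma htC : ((tau : ℝ) : ℂ) ^ 2 = (tau : ℂ) + 1 := by exact_mod_cast tau_sq

lemma hxi3 : xi ^ 3 = (tau : ℂ) * xi - (tau : ℂ) := by
  linear_combination (xi + (tau : ℂ)) * hxi2 + xi * htC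

lemma hxi4 : xi ^ 4 = xi - (tau : ℂ) := by
  linear_combination (xi ^ 2 + (tau : ℂ) * xi + (tau : ℂ) ^ 2 - 1) * hxi2
    + (((tau : ℂ) + 1) * xi - 1) * htC

lemma hxi6 : xi ^ 6 = -xi := by linear_combination xi * hxi5

lemma hxi7 : xi ^ 7 = -(tau : ℂ) * xi + 1 := by linear_combination xi ^ 2 * hxi5 - hxi2

lemma hxi8 : xi ^ 8 = -(tau : ℂ) * xi + (tau : ℂ) := by
  linear_combination xi ^ 3 * hxi5 - hxi3

lemma hxi9 : xi ^ 9 = -xi + (tau : ℂ) := by linear_combination xi ^ 4 * hxi5 - hxi4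

lemma sum10 {M : Type*} [AddCommMonoid M] (f : Fin 10 → M) :
    ∑ j, f j = f 0 + f 1 + f 2 + f 3 + f 4 + f 5 + f 6 + f 7 + f 8 + f 9 := by
  simp [Fin.sum_univ_succ, add_assoc]

lemma sum_eq (m : Fin 10 → ℕ) :
    ∑ j, (m j : ℂ) * xi ^ (j : ℕ) =
      (((m 0 : ℝ) - (m 2 : ℝ) - (m 5 : ℝ) + (m 7 : ℝ)
        + tau * ((m 8 : ℝ) + (m 9 : ℝ) - (m 3 : ℝ) - (m 4 : ℝ)) : ℝ) : ℂ)
      + (((m 1 : ℝ) + (m 4 : ℝ) - (m 6 : ℝ) - (m 9 : ℝ)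
        + tau * ((m 2 : ℝ) + (m 3 : ℝ) - (m 7 : ℝ) - (m 8 : ℝ)) : ℝ) : ℂ) * xi := by
  rw [sum10]
  simp only [show ((0 : Fin 10) : ℕ) = 0 from rfl, show ((1 : Fin 10) : ℕ) = 1 from rfl, show ((2 : Fin 10) : ℕ) = 2 from rfl, show ((3 : Fin 10) : ℕ) = 3 from rfl, show ((4 : Fin 10) : ℕ) = 4 from rfl, show ((5 : Fin 10) : ℕ) = 5 from rfl, show ((6 : Fin 10) : ℕ) = 6 from rfl, show ((7 : Fin 10) : ℕ) = 7 from rfl, show ((8 : Fin 10) : ℕ) = 8 from rfl, show ((9 : Fin 10) : ℕ) = 9 from rfl]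
  push_cast
  linear_combination ((m 2 : ℂ)) * hxi2 + ((m 3 : ℂ)) * hxi3 + ((m 4 : ℂ)) * hxi4
    + ((m 5 : ℂ)) * hxi5 + ((m 6 : ℂ)) * hxi6 + ((m 7 : ℂ)) * hxi7
    + ((m 8 : ℂ)) * hxi8 + ((m 9 : ℂ)) * hxi9


/-- Corollary 6.7: L(n) = {(a+c) + (b-c)τ : a,b,c ∈ ℤ, |a| + 2|b| + 2|c| ≤ n}. -/
theorem L_eq (n : ℕ) :
    L n = {x : ℝ | ∃ a b c : ℤ, |a| + 2 * |b| + 2 * |c| ≤ (n : ℤ) ∧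
      x = ((a + c : ℤ) : ℝ) + ((b - c : ℤ) : ℝ) * tau} := by
  ext x
  constructor
  · rintro ⟨m, hm, hx⟩
    rw [sum_eq] at hx
    -- extract real and imaginary parts
    have him := congrArg Complex.im hx
    simp only [Complex.ofReal_im, Complex.add_im, Complex.mul_im, Complex.ofReal_re,
      zero_mul, add_zero, zero_add, mul_zero] at him
    have hre := congrArg Complex.re hx
    simp only [Complex.ofReal_re, Complex.add_re, Complex.mul_re, Complex.ofReal_im,
      zero_mul, sub_zero, mul_zero, add_zero] at hre
    have hQ0 : (m 1 : ℝ) + (m 4 : ℝ) - (m 6 : ℝ) - (m 9 : ℝ)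
        + tau * ((m 2 : ℝ) + (m 3 : ℝ) - (m 7 : ℝ) - (m 8 : ℝ)) = 0 := by
      rcases mul_eq_zero.mp him.symm with h | h
      · exact h
      · exact absurd h (ne_of_gt xi_im_pos)
    rw [hQ0, zero_mul, add_zero] at hre
    -- integer coefficients
    have hA1B1 : (((m 1 : ℤ) + (m 4 : ℤ) - (m 6 : ℤ) - (m 9 : ℤ) : ℤ) : ℝ)
        + tau * (((m 2 : ℤ) + (m 3 : ℤ) - (m 7 : ℤ) - (m 8 : ℤ) : ℤ) : ℝ) = 0 := by
      push_cast
      linear_combination hQ0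
    set A1 : ℤ := (m 1 : ℤ) + (m 4 : ℤ) - (m 6 : ℤ) - (m 9 : ℤ) with hA1def
    set B1 : ℤ := (m 2 : ℤ) + (m 3 : ℤ) - (m 7 : ℤ) - (m 8 : ℤ) with hB1def
    have htau_irr : Irrational tau := by
      unfold tau
      have := Nat.Prime.irrational_sqrt (show Nat.Prime 5 by norm_num)
      have h1 := this.ratCast_add (q := 1)
      have h2 := h1.ratCast_mul (show (0.5 : ℚ) ≠ 0 by norm_num)
      convert h2 using 1
      push_cast
      ring
    have hB1 : B1 = 0 := by
      by_contra hB
      have hB' : ((B1 : ℝ)) ≠ 0 := Int.cast_ne_zero.mpr hB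
      have : (((-A1 : ℚ) / (B1 : ℚ) : ℚ) : ℝ) = tau := by
        push_cast
        rw [div_eq_iff hB']
        linear_combination -hA1B1
      exact htau_irr ⟨_, this⟩
    have hA1 : A1 = 0 := by
      have : (A1 : ℝ) = 0 := by
        rw [hB1] at hA1B1
        simpa using hA1B1
      exact_mod_cast this
    refine ⟨(m 0 : ℤ) - (m 5 : ℤ), (m 1 : ℤ) - (m 6 : ℤ), (m 7 : ℤ) - (m 2 : ℤ), ?_, ?_⟩
    · rw [sum10] at hm
      rcases abs_cases ((m 0 : ℤ) - (m 5 : ℤ)) with ⟨e1, _⟩ | ⟨e1, _⟩ <;>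
        rcases abs_cases ((m 1 : ℤ) - (m 6 : ℤ)) with ⟨e2, _⟩ | ⟨e2, _⟩ <;>
        rcases abs_cases ((m 7 : ℤ) - (m 2 : ℤ)) with ⟨e3, _⟩ | ⟨e3, _⟩ <;>
        rw [e1, e2, e3] <;> omega
    · have hA1r := congrArg (Int.cast : ℤ → ℝ) hA1
      have hB1r := congrArg (Int.cast : ℤ → ℝ) hB1
      rw [hA1def] at hA1r
      rw [hB1def] at hB1r
      push_cast at hA1r hB1r
      push_cast
      linear_combination hre - tau * hA1r - tau * hB1r
  · rintro ⟨a, b, c, hb, hx⟩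
    set M : Fin 10 → ℕ := ![a.toNat, b.toNat, (-c).toNat, c.toNat, (-b).toNat, (-a).toNat,
      (-b).toNat, c.toNat, (-c).toNat, b.toNat] with hM
    have v0 : M 0 = a.toNat := rfl
    have v1 : M 1 = b.toNat := rfl
    have v2 : M 2 = (-c).toNat := rfl
    have v3 : M 3 = c.toNat := rfl
    have v4 : M 4 = (-b).toNat := rfl
    have v5 : M 5 = (-a).toNat := rfl
    have v6 : M 6 = (-b).toNat := rfl
    have v7 : M 7 = c.toNat := rfl
    have v8 : M 8 = (-c).toNat := rfl
    have v9 : M 9 = b.toNat := rfl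
    refine ⟨M, ?_, ?_⟩
    · rw [sum10, v0, v1, v2, v3, v4, v5, v6, v7, v8, v9]
      rw [Int.abs_eq_natAbs, Int.abs_eq_natAbs, Int.abs_eq_natAbs] at hb
      omega
    · rw [sum_eq, v0, v1, v2, v3, v4, v5, v6, v7, v8, v9]
      have haC : ((a.toNat : ℂ)) - (((-a).toNat : ℂ)) = (a : ℂ) := by
        have : (a.toNat : ℤ) - ((-a).toNat : ℤ) = a := by omega
        exact_mod_cast this
      have hbC : ((b.toNat : ℂ)) - (((-b).toNat : ℂ)) = (b : ℂ) := by
        have : (b.toNat : ℤ) - ((-b).toNat : ℤ) = b := by omega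
        exact_mod_cast this
      have hcC : ((c.toNat : ℂ)) - (((-c).toNat : ℂ)) = (c : ℂ) := by
        have : (c.toNat : ℤ) - ((-c).toNat : ℤ) = c := by omega
        exact_mod_cast this
      rw [hx]
      push_cast
      linear_combination -haC - ((1 : ℂ) - (tau : ℂ)) * hcC - (tau : ℂ) * hbC
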